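/- Let alpha in F_{q^{2n}} with F_{q^{2n}} = F_q(alpha). The map from the set of pairs (f_1, f_2) of coprime nonzero polynomials in F_q[X] of degree < n with f_2 monic to F_{q^{2n}}, given by (f_1, f_2) -> f_1(alpha)/f_2(alpha), is injective. -/

import Mathlib

open Pointwise Polynomial

/-- `W` is an `α`-splitting subspace: the whole space is the internal direct sum
`W ⊕ αW ⊕ ⋯ ⊕ α^(n-1)W`. -/
def IsSplitting {F E : Type*} [Field F] [Field E] [Algebra F E]
    (n : ℕ) (α : E) (W : Submodule F E) : Prop :=
  DirectSum.IsInternal (fun i : Fin n => α ^ (i : ℕ) • W)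

theorem stmt13 (F E : Type*) [Field F] [Fintype F] [Field E] [Algebra F E]
    (n : ℕ) (hn : 0 < n) (hdim : Module.finrank F E = 2 * n)
    (α : E) (hα : Algebra.adjoin F {α} = ⊤) :
    Function.Injective
      (fun p : {p : F[X] × F[X] //
          p.1 ≠ 0 ∧ p.2.Monic ∧ p.1.natDegree < n ∧ p.2.natDegree < n ∧ IsCoprime p.1 p.2} =>
        aeval α p.1.1 / aeval α p.1.2) := by
  have hfd : FiniteDimensional F E :=
    FiniteDimensional.of_finrank_pos (by omega)
  have hint : IsIntegral F α := IsIntegral.of_finite F α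
  have htop : IntermediateField.adjoin F {α} = ⊤ := by
    apply IntermediateField.toSubalgebra_injective
    rw [IntermediateField.adjoin_simple_toSubalgebra_of_isAlgebraic hint.isAlgebraic, hα]
    rfl
  have hdeg : (minpoly F α).natDegree = 2 * n := by
    rw [← IntermediateField.adjoin.finrank hint, htop,
      IntermediateField.finrank_top', hdim]
  -- key: polynomials of natDegree < 2n vanishing at α are zero
  have key : ∀ p : F[X], p.natDegree < 2 * n → aeval α p = 0 → p = 0 := by
    intro p hdp hval
    by_contra hne
    have := minpoly.degree_le_of_ne_zero F α hne hval
    have h1 : (minpoly F α).natDegree ≤ p.natDegree :=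
      natDegree_le_natDegree this
    omega
  have hden : ∀ f : F[X], f.Monic → f.natDegree < n → aeval α f ≠ 0 := by
    intro f hm hd hval
    exact hm.ne_zero (key f (by omega) hval)
  rintro ⟨⟨f1, f2⟩, hf1, hf2, hdf1, hdf2, hcf⟩ ⟨⟨g1, g2⟩, hg1, hg2, hdg1, hdg2, hcg⟩ heq
  simp only at heq hf1 hf2 hdf1 hdf2 hcf hg1 hg2 hdg1 hdg2 hcg
  have hf2α := hden f2 hf2 hdf2
  have hg2α := hden g2 hg2 hdg2
  rw [div_eq_div_iff hf2α hg2α] at heq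
  have hcross : f1 * g2 = g1 * f2 := by
    have : aeval α (f1 * g2 - g1 * f2) = 0 := by
      simp [heq]
    have hdd : (f1 * g2 - g1 * f2).natDegree < 2 * n := by
      have h1 := natDegree_mul_le (p := f1) (q := g2)
      have h2 := natDegree_mul_le (p := g1) (q := f2)
      have := natDegree_sub_le (f1 * g2) (g1 * f2)
      omega
    exact sub_eq_zero.mp (key _ hdd this)
  have hcross' : f1 * g2 = g1 * f2 := hcross
  have h22 : f2 = g2 := by
    have hd1 : f2 ∣ g2 := by
      exact hcf.symm.dvd_of_dvd_mul_left ⟨g1, by rw [hcross]; ring⟩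
    have hd2 : g2 ∣ f2 := by
      exact hcg.symm.dvd_of_dvd_mul_left ⟨f1, by rw [← hcross]; ring⟩
    exact Polynomial.eq_of_monic_of_associated hf2 hg2 (associated_of_dvd_dvd hd1 hd2)
  have h11 : f1 = g1 := by
    subst h22
    exact mul_right_cancel₀ hf2.ne_zero hcross
  exact Subtype.ext (Prod.ext h11 h22)
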